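/- arXiv:1209.0366 — 5 statements merged into one kernel-verified Lean document; each statement's English description precedes it below -/
import Mathlib

section
/- Let G be a finite simple graph with list assignment L, and let T be a subgraph of G such that G is T-critical with respect to L. Let S be a subgraph of G and let G' be an S-component of G. Then G' is S-critical with respect to L (restricted to G'). -/
/-- A proper `L`-coloring of the subgraph `H` of `G`. -/
def SubColoring {V α : Type*} {G : SimpleGraph V} (L : V → Finset α)
    (H : G.Subgraph) (φ : V → α) : Prop :=
  (∀ v ∈ H.verts, φ v ∈ L v) ∧ ∀ u w : V, H.Adj u w → φ u ≠ φ w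

/-- The coloring `φ` of `T` extends to an `L`-coloring of `K`. -/
def ExtendsToSub {V α : Type*} {G : SimpleGraph V} (L : V → Finset α)
    (T K : G.Subgraph) (φ : V → α) : Prop :=
  ∃ ψ : V → α, SubColoring L K ψ ∧ ∀ v ∈ T.verts, ψ v = φ v

/-- `K` is `T`-critical with respect to the list assignment `L`. -/
def IsCriticalSub {V α : Type*} {G : SimpleGraph V} (L : V → Finset α)
    (T K : G.Subgraph) : Prop :=
  T ≤ K ∧ T ≠ K ∧
    ∀ K' : G.Subgraph, T ≤ K' → K' < K →
      ∃ φ : V → α, SubColoring L T φ ∧ ExtendsToSub L T K' φ ∧ ¬ ExtendsToSub L T K φ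

/-- If `G` is `T`-critical and `G'` is an `S`-component of `G`, then `G'` is
`S`-critical. -/
theorem isCriticalSub_of_component {V α : Type*} [Fintype V] {G : SimpleGraph V}
    (L : V → Finset α) (T S G' : G.Subgraph)
    (hT : IsCriticalSub L T (⊤ : G.Subgraph))
    (hSG' : S < G')
    (hTS : T ⊓ G' ≤ S)
    (hedges : ∀ u w : V, G.Adj u w → u ∈ G'.verts → u ∉ S.verts → G'.Adj u w) :
    IsCriticalSub L S G' := by
  classical
  obtain ⟨hTtop, hTne, hcrit⟩ := hT
  refine ⟨hSG'.le, hSG'.ne, ?_⟩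
  intro K' hSK' hK'G'
  -- P v : if v is a vertex of G', it is a vertex of K'
  set P : V → Prop := fun u => u ∈ G'.verts → u ∈ K'.verts with hPdef
  let H : G.Subgraph :=
    { verts := {u | P u}
      Adj := fun u w => G.Adj u w ∧ (G'.Adj u w → K'.Adj u w) ∧ P u ∧ P w
      adj_sub := fun h => h.1
      edge_vert := fun h => h.2.2.1
      symm := ⟨fun u w h =>
        ⟨h.1.symm, fun h' => (h.2.1 h'.symm).symm, h.2.2.2, h.2.2.1⟩⟩ }
  have hTvS : ∀ v, v ∈ T.verts → v ∈ G'.verts → v ∈ S.verts := by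
    intro v hv hv'
    exact hTS.1 ⟨hv, hv'⟩
  have hTH : T ≤ H := by
    constructor
    · intro v hv
      intro hv'
      exact hSK'.1 (hTvS v hv hv')
    · intro u w h
      refine ⟨T.adj_sub h, fun h' => hSK'.2 (hTS.2 ⟨h, h'⟩), ?_, ?_⟩
      · intro hu; exact hSK'.1 (hTvS u (T.edge_vert h) hu)
      · intro hw; exact hSK'.1 (hTvS w (T.edge_vert (T.adj_symm h)) hw)
  have hHlt : H < (⊤ : G.Subgraph) := by
    rw [lt_iff_le_not_ge]
    refine ⟨le_top, fun htop => hK'G'.not_ge ?_⟩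
    constructor
    · intro v hv
      exact (htop.1 (Set.mem_univ v) : P v) hv
    · intro u w h
      exact (htop.2 ((SimpleGraph.Subgraph.top_adj).mpr (G'.adj_sub h))).2.1 h
  obtain ⟨φ, hφT, ⟨ψ, hψH, hψT⟩, hnot⟩ := hcrit H hTH hHlt
  have hK'H : ∀ v, v ∈ K'.verts → v ∈ H.verts := fun v hv _ => hv
  refine ⟨ψ, ⟨?_, ?_⟩, ⟨ψ, ⟨?_, ?_⟩, fun v _ => rfl⟩, ?_⟩
  · intro v hv
    exact hψH.1 v (hK'H v (hSK'.1 hv))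
  · intro u w h
    exact hψH.2 u w ⟨S.adj_sub h, fun _ => hSK'.2 h,
      hK'H u (hSK'.1 (S.edge_vert h)), hK'H w (hSK'.1 (S.edge_vert (S.adj_symm h)))⟩
  · intro v hv
    exact hψH.1 v (hK'H v hv)
  · intro u w h
    exact hψH.2 u w ⟨K'.adj_sub h, fun _ => h,
      hK'H u (K'.edge_vert h), hK'H w (K'.edge_vert (K'.adj_symm h))⟩
  · rintro ⟨θ, ⟨hθL, hθAdj⟩, hθS⟩
    apply hnot
    set D : V → Prop := fun v => v ∈ G'.verts ∧ v ∉ S.verts with hDdef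
    set χ : V → α := fun v => if D v then θ v else ψ v with hχdef
    have hχD : ∀ v, D v → χ v = θ v := fun v hv => by simp only [hχdef]; exact if_pos hv
    have hχnD : ∀ v, ¬ D v → χ v = ψ v := fun v hv => by simp only [hχdef]; exact if_neg hv
    have hnDP : ∀ v, ¬ D v → P v := by
      intro v hv hv'
      rcases not_and_or.mp hv with h | h
      · exact absurd hv' h
      · exact hSK'.1 (not_not.mp h)
    have hSψθ : ∀ v, v ∈ S.verts → χ v = ψ v := by
      intro v hv
      exact hχnD v (fun hD => hD.2 hv)
    -- key: if u is in G' but not in S, χ u ≠ χ w for any G-neighbor w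
    have key : ∀ u w, G.Adj u w → D u → χ u ≠ χ w := by
      intro u w h hu
      have hadj : G'.Adj u w := hedges u w h hu.1 hu.2
      have hθne : θ u ≠ θ w := hθAdj u w hadj
      rw [hχD u hu]
      by_cases hw : D w
      · rw [hχD w hw]; exact hθne
      · have hwS : w ∈ S.verts := by
          rcases not_and_or.mp hw with h' | h'
          · exact absurd (G'.edge_vert (G'.adj_symm hadj)) h'
          · exact not_not.mp h'
        rw [hχnD w hw, ← hθS w hwS]
        exact hθne
    refine ⟨χ, ⟨?_, ?_⟩, ?_⟩
    · intro v _
      by_cases hv : D v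
      · rw [hχD v hv]; exact hθL v hv.1
      · rw [hχnD v hv]; exact hψH.1 v (hnDP v hv)
    · intro u w h
      have hG : G.Adj u w := (SimpleGraph.Subgraph.top_adj).mp h
      by_cases hu : D u
      · exact key u w hG hu
      by_cases hw : D w
      · exact (key w u hG.symm hw).symm
      rw [hχnD u hu, hχnD w hw]
      by_cases hadj : G'.Adj u w
      · have huS : u ∈ S.verts := by
          rcases not_and_or.mp hu with h' | h'
          · exact absurd (G'.edge_vert hadj) h'
          · exact not_not.mp h'
        have hwS : w ∈ S.verts := by
          rcases not_and_or.mp hw with h' | h'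
          · exact absurd (G'.edge_vert (G'.adj_symm hadj)) h'
          · exact not_not.mp h'
        rw [← hθS u huS, ← hθS w hwS]
        exact hθAdj u w hadj
      · exact hψH.2 u w ⟨hG, fun h' => absurd h' hadj, hnDP u hu, hnDP w hw⟩
    · intro v hv
      have hvnD : ¬ D v := fun hD => hD.2 (hTvS v hv hD.1)
      rw [hχnD v hvnD]
      exact hψT v hv
end

section
/- Let G be a finite simple graph with list assignment L, and let T be a subgraph of G such that G is T-critical with respect to L. Then every vertex v of G with v ∉ V(T) satisfies deg_G(v) ≥ |L(v)|. -/
/-- In a `T`-critical graph, every vertex outside `T` has degree at least the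
size of its list. -/
theorem degree_ge_of_isCriticalSub {V α : Type*} [Fintype V] {G : SimpleGraph V}
    [DecidableRel G.Adj]
    (L : V → Finset α) (T : G.Subgraph)
    (hT : IsCriticalSub L T (⊤ : G.Subgraph))
    (v : V) (hv : v ∉ T.verts) :
    (L v).card ≤ G.degree v := by
  classical
  by_contra h
  push_neg at h
  obtain ⟨hTle, hTne, hcrit⟩ := hT
  set K' : G.Subgraph :=
    { verts := {v}ᶜ
      Adj := fun u w => G.Adj u w ∧ u ≠ v ∧ w ≠ v
      adj_sub := fun h => h.1
      edge_vert := fun h => h.2.1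
      symm := ⟨fun u w h => ⟨h.1.symm, h.2.2, h.2.1⟩⟩ } with hK'
  have hTK' : T ≤ K' := by
    constructor
    · intro t ht
      simp only [hK', Set.mem_compl_iff, Set.mem_singleton_iff]
      rintro rfl; exact hv ht
    · intro u w hadj
      refine ⟨T.adj_sub hadj, ?_, ?_⟩
      · rintro rfl; exact hv (T.edge_vert hadj)
      · rintro rfl; exact hv (T.edge_vert hadj.symm)
  have hlt : K' < (⊤ : G.Subgraph) := by
    refine lt_of_le_of_ne le_top ?_
    intro he
    have hvm : v ∈ K'.verts := by rw [he]; trivial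
    simp [hK'] at hvm
  obtain ⟨φ, hφT, ⟨ψ, hψ, hψφ⟩, hnot⟩ := hcrit K' hTK' hlt
  apply hnot
  have hS : ((G.neighborFinset v).image ψ).card < (L v).card :=
    lt_of_le_of_lt (Finset.card_image_le.trans
      (by rw [G.card_neighborFinset_eq_degree])) h
  have hns : ¬ L v ⊆ (G.neighborFinset v).image ψ :=
    fun hsub => absurd (Finset.card_le_card hsub) (not_le.2 hS)
  obtain ⟨c, hcL, hcS⟩ := Finset.not_subset.1 hns
  refine ⟨Function.update ψ v c, ⟨?_, ?_⟩, ?_⟩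
  · intro w _
    rcases eq_or_ne w v with rfl | hw
    · simpa using hcL
    · rw [Function.update_of_ne hw]
      exact hψ.1 w (by simp [hK', hw])
  · intro u w hadj
    have hadj' : G.Adj u w := hadj
    rcases eq_or_ne u v with rfl | hu
    · rw [Function.update_self, Function.update_of_ne hadj'.ne']
      intro he; apply hcS
      rw [he]
      exact Finset.mem_image_of_mem ψ (by simpa using hadj')
    · rcases eq_or_ne w v with rfl | hw
      · rw [Function.update_self, Function.update_of_ne hadj'.ne]
        intro he; apply hcS
        rw [← he]
        exact Finset.mem_image_of_mem ψ (by simpa using hadj'.symm)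
      · rw [Function.update_of_ne hu, Function.update_of_ne hw]
        exact hψ.2 u w ⟨hadj', hu, hw⟩
  · intro w hw
    rw [Function.update_of_ne (by rintro rfl; exact hv hw)]
    exact hψφ w hw
end

section
/- Let G be a finite simple graph with list assignment L, and let T be a subgraph of G such that G is T-critical with respect to L and |L(t)| = 1 for every vertex t of T; let ψ denote the coloring of T determined by these singleton lists. Then for every vertex v of G with v ∉ V(T): (i) if v is adjacent in G to a vertex r of T, then ψ(r) ∈ L(v); (ii) if v is adjacentในG to two distinct vertices r and r' of T, then ψ(r) ≠ ψ(r'). Consequently, if v has exactly k neighbors in V(T), then the set S(v) = L(v) \ {ψ(r) : r ∈ V(T), r adjacent to v} satisfies |S(v)| = |L(v)| − k. -/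
lemma key_theta {V α : Type*} [Fintype V] {G : SimpleGraph V}
    (L : V → Finset α) (T : G.Subgraph)
    (hT : IsCriticalSub L T (⊤ : G.Subgraph))
    (ψ : V → α) (hψ : ∀ t ∈ T.verts, L t = {ψ t})
    (v : V) (hv : v ∉ T.verts) (r : V) (hr : r ∈ T.verts) (hadj : G.Adj v r) :
    ∃ θ : V → α, SubColoring L ((⊤ : G.Subgraph).deleteEdges {s(v,r)}) θ ∧
      (∀ t ∈ T.verts, θ t = ψ t) ∧ θ v = ψ r := by
  obtain ⟨hTle, hTne, hcrit⟩ := hT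
  set K' := (⊤ : G.Subgraph).deleteEdges {s(v,r)} with hK'
  have hTK' : T ≤ K' := by
    constructor
    · exact fun x _ => trivial
    · intro u w h
      rw [SimpleGraph.Subgraph.deleteEdges_adj]
      refine ⟨hTle.2 h, ?_⟩
      intro hmem
      rw [Set.mem_singleton_iff, Sym2.eq_iff] at hmem
      obtain ⟨rfl, rfl⟩ | ⟨rfl, rfl⟩ := hmem
      · exact hv (T.edge_vert h)
      · exact hv (T.edge_vert h.symm)
  have hK'lt : K' < (⊤ : G.Subgraph) := by
    refine lt_of_le_of_ne (SimpleGraph.Subgraph.deleteEdges_le _) ?_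
    intro heq
    have : K'.Adj v r := by rw [heq]; simpa using hadj
    rw [SimpleGraph.Subgraph.deleteEdges_adj] at this
    exact this.2 rfl
  obtain ⟨φ, hφT, ⟨θ, hθ, hθT⟩, hnext⟩ := hcrit K' hTK' hK'lt
  have hφψ : ∀ t ∈ T.verts, φ t = ψ t := by
    intro t ht
    have := hφT.1 t ht
    rwa [hψ t ht, Finset.mem_singleton] at this
  have hθψ : ∀ t ∈ T.verts, θ t = ψ t := fun t ht => (hθT t ht).trans (hφψ t ht)
  refine ⟨θ, hθ, hθψ, ?_⟩
  by_contra h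
  apply hnext
  refine ⟨θ, ⟨?_, ?_⟩, hθT⟩
  · intro u hu
    exact hθ.1 u (by simpa [hK', SimpleGraph.Subgraph.deleteEdges_verts] using hu)
  · intro u w huw
    by_cases he : s(u,w) = s(v,r)
    · rw [Sym2.eq_iff] at he
      rcases he with ⟨rfl, rfl⟩ | ⟨rfl, rfl⟩
      · rw [hθψ w hr]; exact h
      · rw [hθψ u hr]; exact fun hc => h hc.symm
    · exact hθ.2 u w ⟨huw, by simpa using he⟩

/-- If `G` is `T`-critical and all vertices of `T` have singleton lists
determining the coloring `ψ`, then for every `v ∉ V(T)`: the color of each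
neighbor of `v` in `T` lies in `L(v)`, distinct neighbors of `v` in `T` get
distinct colors, and consequently
`|L(v) \ {ψ(r) : r ∈ V(T), r ~ v}| = |L(v)| - k` where `k` is the number of
neighbors of `v` in `V(T)`. -/
theorem singleton_lists_of_isCriticalSub {V α : Type*} [Fintype V] {G : SimpleGraph V}
    (L : V → Finset α) (T : G.Subgraph)
    (hT : IsCriticalSub L T (⊤ : G.Subgraph))
    (ψ : V → α) (hψ : ∀ t ∈ T.verts, L t = {ψ t})
    (v : V) (hv : v ∉ T.verts) :
    (∀ r ∈ T.verts, G.Adj v r → ψ r ∈ L v) ∧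
    (∀ r ∈ T.verts, ∀ r' ∈ T.verts, r ≠ r' → G.Adj v r → G.Adj v r' → ψ r ≠ ψ r') ∧
    ((↑(L v) : Set α) \ (ψ '' {r : V | r ∈ T.verts ∧ G.Adj v r})).ncard
      = (L v).card - {r : V | r ∈ T.verts ∧ G.Adj v r}.ncard := by
  have part1 : ∀ r ∈ T.verts, G.Adj v r → ψ r ∈ L v := by
    intro r hr hadj
    obtain ⟨θ, hθ, hθT, hθv⟩ := key_theta L T hT ψ hψ v hv r hr hadj
    have : θ v ∈ L v := hθ.1 v (by simp [SimpleGraph.Subgraph.deleteEdges_verts])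
    rwa [hθv] at this
  have part2 : ∀ r ∈ T.verts, ∀ r' ∈ T.verts, r ≠ r' → G.Adj v r → G.Adj v r' →
      ψ r ≠ ψ r' := by
    intro r hr r' hr' hne hadj hadj' heq
    obtain ⟨θ, hθ, hθT, hθv⟩ := key_theta L T hT ψ hψ v hv r hr hadj
    have hKadj : ((⊤ : G.Subgraph).deleteEdges {s(v,r)}).Adj v r' := by
      rw [SimpleGraph.Subgraph.deleteEdges_adj]
      refine ⟨by simpa using hadj', ?_⟩
      simp only [Set.mem_singleton_iff, Sym2.eq_iff]
      rintro (⟨-, rfl⟩ | ⟨rfl, rfl⟩)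
      · exact hne rfl
      · exact hv hr
    exact hθ.2 v r' hKadj (by rw [hθv, hθT r' hr', ← heq])
  refine ⟨part1, part2, ?_⟩
  have hsub : ψ '' {r : V | r ∈ T.verts ∧ G.Adj v r} ⊆ (↑(L v) : Set α) := by
    rintro _ ⟨r, ⟨hr, ha⟩, rfl⟩
    exact part1 r hr ha
  have hinj : Set.InjOn ψ {r : V | r ∈ T.verts ∧ G.Adj v r} := by
    intro r hr r' hr' heq
    by_contra hne
    exact part2 r hr.1 r' hr'.1 hne hr.2 hr'.2 heq
  rw [Set.ncard_diff hsub (Set.toFinite _), Set.ncard_coe_finset,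
    Set.ncard_image_of_injOn hinj]
end

section
/- Let G be a fan procession with base xyz and let L be a dangerous list assignment for G. If φ₁ and φ₂ are precolorings of the base xyz that do not extend to an L-coloring of G, and φ₁(x) = φ₂(x) and φ₁(y) = φ₂(y), then φ₁ = φ₂. -/
/-- Vertices of a fan procession with `k` constituent pieces, where piece `i`
has order `ord i` and is a fat fan iff `fat i = true` (otherwise a fan):
the base `x, y, z`; the internal boundary vertices `bnd i` (representing `v_i`
for `1 ≤ i ≤ k-1`, with `v_0 = x` and `v_k = z`); the apex of each fat fan
piece; and the path vertices `pv i j` of piece `i`. -/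
inductive PVert (k : ℕ) (ord : Fin k → ℕ) (fat : Fin k → Bool) : Type where
  | x | y | z
  | bnd (i : Fin k) (h : (i : ℕ) ≠ 0)
  | apex (i : Fin k) (h : fat i = true)
  | pv (i : Fin k) (j : Fin (ord i))

/-- The boundary vertex `v_i` of the fan procession: `v_0 = x`, `v_k = z`
(and `v_i = z` for `i ≥ k`), and `v_i = bnd i` for `0 < i < k`. -/
def bvert {k : ℕ} {ord : Fin k → ℕ} {fat : Fin k → Bool} (i : ℕ) :
    PVert k ord fat :=
  if h0 : i = 0 then PVert.x
  else if hk : k ≤ i then PVert.z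
  else PVert.bnd ⟨i, by omega⟩ h0

/-- The hub of piece `i`: its apex if it is a fat fan, and `y` if it is a fan. -/
def hub {k : ℕ} {ord : Fin k → ℕ} {fat : Fin k → Bool} (i : Fin k) :
    PVert k ord fat :=
  if h : fat i = true then PVert.apex i h else PVert.y

/-- The fan procession with base `x y z` whose `i`-th constituent piece has
base `v_{i-1} y v_i`, has order `ord i`, and is a fat fan iff `fat i`. -/
def procGraph (k : ℕ) (ord : Fin k → ℕ) (fat : Fin k → Bool) :
    SimpleGraph (PVert k ord fat) :=
  SimpleGraph.fromEdgeSet (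
    -- the path x y z
    {s(PVert.x, PVert.y), s(PVert.y, PVert.z)} ∪
    -- y is adjacent to all internal boundary vertices v_1, …, v_{k-1}
    {e | ∃ (i : Fin k) (h : (i : ℕ) ≠ 0), e = s(PVert.y, PVert.bnd i h)} ∪
    -- the apex of a fat fan piece is adjacent to v_{i-1}, y and v_i
    {e | ∃ (i : Fin k) (h : fat i = true),
        e = s(PVert.apex i h, bvert (i : ℕ)) ∨
        e = s(PVert.apex i h, PVert.y) ∨
        e = s(PVert.apex i h, bvert ((i : ℕ) + 1))} ∪
    -- the hub of each piece is adjacent to all its path vertices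
    {e | ∃ (i : Fin k) (j : Fin (ord i)), e = s(hub i, PVert.pv i j)} ∪
    -- the first path vertex of piece i is adjacent to v_{i-1}
    {e | ∃ (i : Fin k) (j : Fin (ord i)), (j : ℕ) = 0 ∧
        e = s(bvert (i : ℕ), PVert.pv i j)} ∪
    -- consecutive path vertices are adjacent
    {e | ∃ (i : Fin k) (j j' : Fin (ord i)), (j : ℕ) + 1 = (j' : ℕ) ∧
        e = s(PVert.pv i j, PVert.pv i j')} ∪
    -- the last path vertex of piece i is adjacent to v_i
    {e | ∃ (i : Fin k) (j : Fin (ord i)), (j : ℕ) = ord i - 1 ∧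
        e = s(PVert.pv i j, bvert ((i : ℕ) + 1))} ∪
    -- a fan of order 0 is just the edge v_{i-1} v_i
    {e | ∃ i : Fin k, fat i = false ∧ ord i = 0 ∧
        e = s(bvert (i : ℕ), bvert ((i : ℕ) + 1))})

/-- A dangerous list assignment for the fan procession: every vertex other
than `x, y, z` and the apexes has a list of size exactly `3`, and every apex
has a list of size exactly `5`. -/
def DangerousProc {k : ℕ} {ord : Fin k → ℕ} {fat : Fin k → Bool} {α : Type*}
    (L : PVert k ord fat → Finset α) : Prop :=
  (∀ (i : Fin k) (h : (i : ℕ) ≠ 0), (L (PVert.bnd i h)).card = 3) ∧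
  (∀ (i : Fin k) (j : Fin (ord i)), (L (PVert.pv i j)).card = 3) ∧
  (∀ (i : Fin k) (h : fat i = true), (L (PVert.apex i h)).card = 5)

/-- `cx, cy, cz` is a precoloring of the base `x y z`, i.e. a proper coloring
of the subgraph induced by `{x, y, z}`. -/
def IsPrecolProc (k : ℕ) (ord : Fin k → ℕ) (fat : Fin k → Bool) {α : Type*}
    (cx cy cz : α) : Prop :=
  cx ≠ cy ∧ cy ≠ cz ∧
    ((procGraph k ord fat).Adj PVert.x PVert.z → cx ≠ cz)

/-- The precoloring `cx, cy, cz` of the base extends to an `L`-coloring of the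
fan procession. -/
def ExtendsProc {k : ℕ} {ord : Fin k → ℕ} {fat : Fin k → Bool} {α : Type*}
    (L : PVert k ord fat → Finset α) (cx cy cz : α) : Prop :=
  ∃ ψ : PVert k ord fat → α,
    (∀ u w : PVert k ord fat, (procGraph k ord fat).Adj u w → ψ u ≠ ψ w) ∧
    ψ PVert.x = cx ∧ ψ PVert.y = cy ∧ ψ PVert.z = cz ∧
    (∀ w : PVert k ord fat, w ≠ PVert.x → w ≠ PVert.y → w ≠ PVert.z → ψ w ∈ L w)


open Finset in
lemma path_lemma {α : Type*} [DecidableEq α] (h : α) :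
    ∀ (n : ℕ) (Lp : Fin n → Finset α), (∀ j, 3 ≤ (Lp j).card) → ∀ (u : α),
    ∃ b : α, (n = 0 → b = u) ∧ ∀ w, w ≠ h → w ≠ b →
      ∃ p : Fin n → α, (∀ j, p j ∈ Lp j) ∧ (∀ j, p j ≠ h) ∧
        (∀ j : Fin n, (j : ℕ) = 0 → p j ≠ u) ∧
        (∀ j : Fin n, (j : ℕ) = n - 1 → p j ≠ w) ∧
        (∀ j j' : Fin n, (j : ℕ) + 1 = (j' : ℕ) → p j ≠ p j') := by
  intro n
  induction n with
  | zero =>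
    intro Lp _ u
    exact ⟨u, fun _ => rfl, fun w hw hwb =>
      ⟨Fin.elim0, fun j => j.elim0, fun j => j.elim0, fun j => j.elim0,
        fun j => j.elim0, fun j => j.elim0⟩⟩
  | succ n ih =>
    intro Lp hLp u
    -- pick a color for the first path vertex
    have hne : (Lp 0 \ {u, h}).Nonempty := by
      apply Finset.card_pos.mp
      have h1 : (Lp 0 \ {u, h}).card ≥ (Lp 0).card - ({u, h} : Finset α).card :=
        Finset.le_card_sdiff _ _
      have h2 : ({u, h} : Finset α).card ≤ 2 := Finset.card_insert_le _ _ |>.trans (by simp)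
      have := hLp 0
      omega
    obtain ⟨p0, hp0⟩ := hne
    rw [Finset.mem_sdiff, Finset.mem_insert, Finset.mem_singleton] at hp0
    push_neg at hp0
    obtain ⟨hp0mem, hp0u, hp0h⟩ := hp0
    obtain ⟨b, hb0, hb⟩ := ih (fun j => Lp j.succ) (fun j => hLp j.succ) p0
    refine ⟨b, by omega, fun w hwh hwb => ?_⟩
    obtain ⟨p', hmem, hh, hfirst, hlast, hcons⟩ := hb w hwh hwb
    refine ⟨Fin.cases p0 p', ?_, ?_, ?_, ?_, ?_⟩
    · intro j
      induction j using Fin.cases with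
      | zero => simpa using hp0mem
      | succ i => simpa using hmem i
    · intro j
      induction j using Fin.cases with
      | zero => simpa using hp0h
      | succ i => simpa using hh i
    · intro j hj
      induction j using Fin.cases with
      | zero => simpa using hp0u
      | succ i => simp at hj
    · intro j hj
      induction j using Fin.cases with
      | zero =>
        -- then n = 0, so b = p0
        simp at hj
        have : b = p0 := hb0 (by omega)
        simpa [this ▸ hwb] using fun hc => hwb (by rw [this, hc])
      | succ i =>
        have : (i : ℕ) = n - 1 := by simp at hj; omega
        simpa using hlast i this
    · intro j j' hjj'
      induction j using Fin.cases with
      | zero =>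
        induction j' using Fin.cases with
        | zero => simp at hjj'
        | succ i' =>
          have : (i' : ℕ) = 0 := by simpa using hjj'.symm
          have := hfirst i' this
          simpa using Ne.symm this
      | succ i =>
        induction j' using Fin.cases with
        | zero => simp at hjj'
        | succ i' =>
          have : (i : ℕ) + 1 = (i' : ℕ) := by simpa using hjj'
          simpa using hcons i i' this



/-- Local colorability of piece `i` with boundary colors `u, w` and `y` colored `cy`. -/
def PieceOK {k : ℕ} {ord : Fin k → ℕ} {fat : Fin k → Bool} {α : Type*}
    (L : PVert k ord fat → Finset α) (cy : α) (i : Fin k) (u w : α) : Prop :=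
  ∃ (A : α) (p : Fin (ord i) → α),
    (∀ h : fat i = true, A ∈ L (PVert.apex i h) ∧ A ≠ u ∧ A ≠ cy ∧ A ≠ w) ∧
    (∀ j, p j ∈ L (PVert.pv i j)) ∧
    (∀ j, p j ≠ (if fat i then A else cy)) ∧
    (∀ j : Fin (ord i), (j : ℕ) = 0 → p j ≠ u) ∧
    (∀ j : Fin (ord i), (j : ℕ) = ord i - 1 → p j ≠ w) ∧
    (∀ j j' : Fin (ord i), (j : ℕ) + 1 = (j' : ℕ) → p j ≠ p j') ∧
    (fat i = false → ord i = 0 → u ≠ w)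

lemma piece_lemma {k : ℕ} {ord : Fin k → ℕ} {fat : Fin k → Bool} {α : Type*}
    [DecidableEq α]
    (L : PVert k ord fat → Finset α) (hL : DangerousProc L) (cy : α)
    (i : Fin k) (u : α) :
    ∃ S : Finset α, S.card ≤ 1 ∧
      ∀ w, w ≠ cy → w ∉ S → PieceOK L cy i u w := by
  obtain ⟨hLb, hLp, hLa⟩ := hL
  cases hf : fat i with
  | false =>
    obtain ⟨b, hb0, hb⟩ := path_lemma cy (ord i) (fun j => L (PVert.pv i j))
      (fun j => (hLp i j).ge) u
    refine ⟨{b}, by simp, fun w hwcy hwb => ?_⟩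
    rw [Finset.mem_singleton] at hwb
    obtain ⟨p, hmem, hh, hfirst, hlast, hcons⟩ := hb w hwcy hwb
    refine ⟨u, p, fun h => absurd h (by simp [hf]), hmem, ?_, hfirst, hlast, hcons,
      fun _ h0 => fun hc => hwb (by rw [← hc, hb0 h0])⟩
    intro j; rw [hf]; simpa using hh j
  | true =>
    -- pick three distinct candidate apex colors
    have hcard : 3 ≤ (L (PVert.apex i hf) \ {u, cy}).card := by
      have h1 := Finset.le_card_sdiff ({u, cy} : Finset α) (L (PVert.apex i hf))
      have h2 : ({u, cy} : Finset α).card ≤ 2 :=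
        (Finset.card_insert_le _ _).trans (by simp)
      have := hLa i hf
      omega
    obtain ⟨t, hts, htc⟩ := Finset.exists_subset_card_eq hcard
    obtain ⟨c₁, c₂, c₃, h12, h13, h23, ht⟩ := Finset.card_eq_three.mp htc
    have hc : ∀ c ∈ t, c ∈ L (PVert.apex i hf) ∧ c ≠ u ∧ c ≠ cy := by
      intro c hct
      have := hts hct
      rw [Finset.mem_sdiff, Finset.mem_insert, Finset.mem_singleton] at this
      push_neg at this
      tauto
    have hc1 := hc c₁ (by simp [ht]); have hc2 := hc c₂ (by simp [ht])
    have hc3 := hc c₃ (by simp [ht])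
    obtain ⟨b₁, _, hb₁⟩ := path_lemma c₁ (ord i) (fun j => L (PVert.pv i j))
      (fun j => (hLp i j).ge) u
    obtain ⟨b₂, _, hb₂⟩ := path_lemma c₂ (ord i) (fun j => L (PVert.pv i j))
      (fun j => (hLp i j).ge) u
    obtain ⟨b₃, _, hb₃⟩ := path_lemma c₃ (ord i) (fun j => L (PVert.pv i j))
      (fun j => (hLp i j).ge) u
    refine ⟨({b₁, c₁} ∩ {b₂, c₂} ∩ {b₃, c₃} : Finset α), ?_, ?_⟩
    · by_contra hcard1
      push_neg at hcard1
      obtain ⟨d, hd, e, he, hde⟩ := Finset.one_lt_card.mp hcard1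
      simp only [Finset.mem_inter] at hd he
      have key : ∀ (b c : α), d ∈ ({b, c} : Finset α) → e ∈ ({b, c} : Finset α) →
          c ∈ ({d, e} : Finset α) := by
        intro b c hd' he'
        simp only [Finset.mem_insert, Finset.mem_singleton] at hd' he' ⊢
        by_contra hcde
        push_neg at hcde
        rcases hd' with h | h <;> rcases he' with h' | h' <;>
          first | (exact hde (h.trans h'.symm)) | tauto
      have k1 := key b₁ c₁ hd.1.1 he.1.1
      have k2 := key b₂ c₂ hd.1.2 he.1.2
      have k3 := key b₃ c₃ hd.2 he.2
      have hsub : ({c₁, c₂, c₃} : Finset α) ⊆ {d, e} := by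
        intro c hcm
        simp only [Finset.mem_insert, Finset.mem_singleton] at hcm
        rcases hcm with rfl | rfl | rfl <;> assumption
      have h3 : ({c₁, c₂, c₃} : Finset α).card = 3 := by
        rw [Finset.card_insert_of_notMem (by simp [h12, h13]),
          Finset.card_insert_of_notMem (by simp [h23]), Finset.card_singleton]
      have := Finset.card_le_card hsub
      have h2 : ({d, e} : Finset α).card ≤ 2 :=
        (Finset.card_insert_le _ _).trans (by simp)
      omega
    · intro w hwcy hwS
      simp only [Finset.mem_inter, Finset.mem_insert, Finset.mem_singleton, not_and_or,
        not_or] at hwS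
      have pick : ∃ (c b : α), c ∈ L (PVert.apex i hf) ∧ c ≠ u ∧ c ≠ cy ∧ w ≠ b ∧ w ≠ c ∧
          ∀ w', w' ≠ c → w' ≠ b →
          ∃ p : Fin (ord i) → α, (∀ j, p j ∈ L (PVert.pv i j)) ∧ (∀ j, p j ≠ c) ∧
            (∀ j : Fin (ord i), (j : ℕ) = 0 → p j ≠ u) ∧
            (∀ j : Fin (ord i), (j : ℕ) = ord i - 1 → p j ≠ w') ∧
            (∀ j j' : Fin (ord i), (j : ℕ) + 1 = (j' : ℕ) → p j ≠ p j') := by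
        rcases hwS with (⟨hb, hc⟩ | ⟨hb, hc⟩) | ⟨hb, hc⟩
        · exact ⟨c₁, b₁, hc1.1, hc1.2.1, hc1.2.2, hb, hc, hb₁⟩
        · exact ⟨c₂, b₂, hc2.1, hc2.2.1, hc2.2.2, hb, hc, hb₂⟩
        · exact ⟨c₃, b₃, hc3.1, hc3.2.1, hc3.2.2, hb, hc, hb₃⟩
      obtain ⟨c, b, hcmem, hcu, hccy, hwb, hwc, hpath⟩ := pick
      obtain ⟨p, hmem, hh, hfirst, hlast, hcons⟩ := hpath w hwc hwb
      refine ⟨c, p, fun _ => ⟨hcmem, hcu, hccy, fun hc' => hwc hc'.symm⟩,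
        hmem, ?_, hfirst, hlast, hcons, fun hff => absurd hf (by simp [hff])⟩
      intro j; rw [hf]; simpa using hh j

lemma chain_exists {α : Type*} (P : α → ℕ → α → Prop)
    (hstep : ∀ a i, ∃ b, P a i b) (a0 : α) :
    ∃ c : ℕ → α, c 0 = a0 ∧ ∀ i, P (c i) i (c (i + 1)) := by
  choose f hf using hstep
  exact ⟨fun n => Nat.rec a0 (fun i prev => f prev i) n, rfl, fun i => hf _ i⟩

/-- The coloring assembled from the data. -/
def buildPsi {k : ℕ} {ord : Fin k → ℕ} {fat : Fin k → Bool} {α : Type*}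
    (cx cy w : α) (c : ℕ → α) (A : Fin k → α)
    (P : ∀ i : Fin k, Fin (ord i) → α) : PVert k ord fat → α
  | .x => cx
  | .y => cy
  | .z => w
  | .bnd i _ => c i
  | .apex i _ => A i
  | .pv i j => P i j

lemma proc_main {k : ℕ} {ord : Fin k → ℕ} {fat : Fin k → Bool} {α : Type*}
    [DecidableEq α] (hk : 1 ≤ k)
    (L : PVert k ord fat → Finset α) (hL : DangerousProc L)
    (cx cy : α) (hxy : cx ≠ cy) :
    ∃ S : Finset α, S.card ≤ 1 ∧ ∀ w, w ≠ cy → w ∉ S → ExtendsProc L cx cy w := by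
  obtain ⟨hLb, hLp, hLa⟩ := hL
  have hpiece := fun (u : α) (i : Fin k) => piece_lemma L ⟨hLb, hLp, hLa⟩ cy i u
  choose S hScard hSok using hpiece
  -- choose the colors of the internal boundary vertices
  have hstep : ∀ (a : α) (i : ℕ), ∃ b : α, ∀ h : i + 1 < k,
      b ∈ L (PVert.bnd ⟨i + 1, h⟩ (Nat.succ_ne_zero i)) ∧ b ≠ cy ∧
        b ∉ S a ⟨i, by omega⟩ := by
    intro a i
    by_cases h : i + 1 < k
    · have hne : (L (PVert.bnd ⟨i + 1, h⟩ (Nat.succ_ne_zero i)) \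
          insert cy (S a ⟨i, by omega⟩)).Nonempty := by
        apply Finset.card_pos.mp
        have h1 := Finset.le_card_sdiff (insert cy (S a ⟨i, by omega⟩))
          (L (PVert.bnd ⟨i + 1, h⟩ (Nat.succ_ne_zero i)))
        have h2 : (insert cy (S a ⟨i, by omega⟩)).card ≤ 2 := by
          have := Finset.card_insert_le cy (S a ⟨i, by omega⟩)
          have := hScard a ⟨i, by omega⟩
          omega
        have := hLb ⟨i + 1, h⟩ (Nat.succ_ne_zero i)
        omega
      obtain ⟨b, hb⟩ := hne
      rw [Finset.mem_sdiff, Finset.mem_insert] at hb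
      push_neg at hb
      exact ⟨b, fun _ => ⟨hb.1, hb.2.1, hb.2.2⟩⟩
    · exact ⟨a, fun h' => absurd h' h⟩
  obtain ⟨cseq, hc0, hcstep⟩ := chain_exists _ hstep cx
  refine ⟨S (cseq (k - 1)) ⟨k - 1, by omega⟩, hScard _ _, ?_⟩
  intro w hw hwS
  -- colorability of every piece
  have POKall : ∀ i : Fin k,
      PieceOK L cy i (cseq (i : ℕ)) (if k ≤ (i : ℕ) + 1 then w else cseq ((i : ℕ) + 1)) := by
    intro i
    by_cases hik : (i : ℕ) + 1 < k
    · rw [if_neg (by omega)]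
      have h3 := hcstep i hik
      exact hSok (cseq i) i _ h3.2.1 h3.2.2
    · have hik' : (i : ℕ) = k - 1 := by have := i.isLt; omega
      rw [if_pos (by omega)]
      apply hSok (cseq i) i w hw
      have hieq : i = (⟨k - 1, by omega⟩ : Fin k) := Fin.ext (by simpa using hik')
      rw [hieq]
      simpa using hwS
  unfold PieceOK at POKall
  choose A P hA hmem hhub hfirst hlast hcons hzero using POKall
  have hcs_ne_cy : ∀ t, 0 < t → t < k → cseq t ≠ cy := by
    intro t h1 h2
    obtain ⟨s, rfl⟩ : ∃ s, t = s + 1 := ⟨t - 1, by omega⟩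
    exact (hcstep s h2).2.1
  have hbmem : ∀ (t : ℕ) (h1 : 0 < t) (h2 : t < k) (h3 : t ≠ 0),
      cseq t ∈ L (PVert.bnd ⟨t, h2⟩ h3) := by
    intro t h1 h2 h3
    obtain ⟨s, rfl⟩ : ∃ s, t = s + 1 := ⟨t - 1, by omega⟩
    exact (hcstep s h2).1
  set ψ : PVert k ord fat → α := buildPsi cx cy w cseq A P with hψ
  -- value of ψ on boundary vertices
  have hbv1 : ∀ i : Fin k, ψ (bvert (i : ℕ)) = cseq (i : ℕ) := by
    intro i
    unfold bvert
    by_cases h0 : (i : ℕ) = 0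
    · rw [dif_pos h0, h0]
      simp only [hψ, buildPsi, hc0]
    · rw [dif_neg h0, dif_neg (by have := i.isLt; omega)]
      simp only [hψ, buildPsi]
  have hbv2 : ∀ i : Fin k,
      ψ (bvert ((i : ℕ) + 1)) = if k ≤ (i : ℕ) + 1 then w else cseq ((i : ℕ) + 1) := by
    intro i
    by_cases hk1 : k ≤ (i : ℕ) + 1
    · rw [if_pos hk1]
      unfold bvert
      rw [dif_neg (Nat.succ_ne_zero _), dif_pos hk1]
      simp only [hψ, buildPsi]
    · rw [if_neg hk1]
      unfold bvert
      rw [dif_neg (Nat.succ_ne_zero _), dif_neg hk1]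
      simp only [hψ, buildPsi]
  refine ⟨ψ, ?_, rfl, rfl, rfl, ?_⟩
  · intro u v hadj
    rw [procGraph, SimpleGraph.fromEdgeSet_adj] at hadj
    obtain ⟨hmem', hne⟩ := hadj
    simp only [Set.mem_union, Set.mem_insert_iff, Set.mem_singleton_iff,
      Set.mem_setOf_eq] at hmem'
    rcases hmem' with (((((((h | h) | ⟨i, hi, h⟩) | ⟨i, hfi, h | h | h⟩) | ⟨i, j, h⟩) |
        ⟨i, j, hj, h⟩) | ⟨i, j, j', hjj, h⟩) | ⟨i, j, hj, h⟩) | ⟨i, hfi, hoi, h⟩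
    · have key : ψ PVert.x ≠ ψ PVert.y := hxy
      rw [Sym2.eq_iff] at h
      rcases h with ⟨rfl, rfl⟩ | ⟨rfl, rfl⟩
      exacts [key, key.symm]
    · have key : ψ PVert.y ≠ ψ PVert.z := by
        simp only [hψ, buildPsi]; exact fun hc => hw hc.symm
      rw [Sym2.eq_iff] at h
      rcases h with ⟨rfl, rfl⟩ | ⟨rfl, rfl⟩
      exacts [key, key.symm]
    · have key : ψ PVert.y ≠ ψ (PVert.bnd i hi) :=
        fun hc => hcs_ne_cy i (Nat.pos_of_ne_zero hi) i.isLt hc.symm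
      rw [Sym2.eq_iff] at h
      rcases h with ⟨rfl, rfl⟩ | ⟨rfl, rfl⟩
      exacts [key, key.symm]
    · have key : ψ (PVert.apex i hfi) ≠ ψ (bvert (i : ℕ)) := by
        rw [hbv1]; simp only [hψ, buildPsi]; exact (hA i hfi).2.1
      rw [Sym2.eq_iff] at h
      rcases h with ⟨rfl, rfl⟩ | ⟨rfl, rfl⟩
      exacts [key, key.symm]
    · have key : ψ (PVert.apex i hfi) ≠ ψ PVert.y := (hA i hfi).2.2.1
      rw [Sym2.eq_iff] at h
      rcases h with ⟨rfl, rfl⟩ | ⟨rfl, rfl⟩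
      exacts [key, key.symm]
    · have key : ψ (PVert.apex i hfi) ≠ ψ (bvert ((i : ℕ) + 1)) := by
        rw [hbv2]; simp only [hψ, buildPsi]; exact (hA i hfi).2.2.2
      rw [Sym2.eq_iff] at h
      rcases h with ⟨rfl, rfl⟩ | ⟨rfl, rfl⟩
      exacts [key, key.symm]
    · have key : ψ (hub i) ≠ ψ (PVert.pv i j) := by
        have := hhub i j
        unfold hub
        split_ifs with hfi
        · rw [if_pos hfi] at this
          simp only [hψ, buildPsi]
          exact fun hc => this hc.symm
        · rw [if_neg hfi] at this
          simp only [hψ, buildPsi]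
          exact fun hc => this hc.symm
      rw [Sym2.eq_iff] at h
      rcases h with ⟨rfl, rfl⟩ | ⟨rfl, rfl⟩
      exacts [key, key.symm]
    · have key : ψ (bvert (i : ℕ)) ≠ ψ (PVert.pv i j) := by
        rw [hbv1]; simp only [hψ, buildPsi]
        exact fun hc => hfirst i j hj hc.symm
      rw [Sym2.eq_iff] at h
      rcases h with ⟨rfl, rfl⟩ | ⟨rfl, rfl⟩
      exacts [key, key.symm]
    · have key : ψ (PVert.pv i j) ≠ ψ (PVert.pv i j') := hcons i j j' hjj
      rw [Sym2.eq_iff] at h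
      rcases h with ⟨rfl, rfl⟩ | ⟨rfl, rfl⟩
      exacts [key, key.symm]
    · have key : ψ (PVert.pv i j) ≠ ψ (bvert ((i : ℕ) + 1)) := by
        rw [hbv2]; simp only [hψ, buildPsi]; exact hlast i j hj
      rw [Sym2.eq_iff] at h
      rcases h with ⟨rfl, rfl⟩ | ⟨rfl, rfl⟩
      exacts [key, key.symm]
    · have key : ψ (bvert (i : ℕ)) ≠ ψ (bvert ((i : ℕ) + 1)) := by
        rw [hbv1, hbv2]; exact hzero i hfi hoi
      rw [Sym2.eq_iff] at h
      rcases h with ⟨rfl, rfl⟩ | ⟨rfl, rfl⟩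
      exacts [key, key.symm]
  · intro v hvx hvy hvz
    simp only [hψ]
    match v with
    | .x => exact absurd rfl hvx
    | .y => exact absurd rfl hvy
    | .z => exact absurd rfl hvz
    | .bnd i hi => exact hbmem i (Nat.pos_of_ne_zero hi) i.isLt hi
    | .apex i hf => exact (hA i hf).1
    | .pv i j => exact hmem i j

lemma procession_nonextendable_agree' {k : ℕ} {ord : Fin k → ℕ}
    {fat : Fin k → Bool} {α : Type*}
    (hk : 1 ≤ k) (hfat : ∀ i : Fin k, fat i = true → 1 ≤ ord i)
    (L : PVert k ord fat → Finset α) (hL : DangerousProc L)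
    (cx cy cz cz' : α)
    (h1 : IsPrecolProc k ord fat cx cy cz)
    (h2 : IsPrecolProc k ord fat cx cy cz')
    (hne1 : ¬ ExtendsProc L cx cy cz)
    (hne2 : ¬ ExtendsProc L cx cy cz') :
    cz = cz' := by
  classical
  obtain ⟨S, hScard, hext⟩ := proc_main hk L hL cx cy h1.1
  have hz : cz ∈ S := by
    by_contra hc
    exact hne1 (hext cz (fun h => h1.2.1 h.symm) hc)
  have hz' : cz' ∈ S := by
    by_contra hc
    exact hne2 (hext cz' (fun h => h2.2.1 h.symm) hc)
  exact Finset.card_le_one.mp hScard cz hz cz' hz'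

/-- Two non-extendable precolorings of the base of a fan procession with a
dangerous list assignment that agree on `x` and `y` are equal. -/
theorem procession_nonextendable_agree {k : ℕ} {ord : Fin k → ℕ}
    {fat : Fin k → Bool} {α : Type*}
    (hk : 1 ≤ k) (hfat : ∀ i : Fin k, fat i = true → 1 ≤ ord i)
    (L : PVert k ord fat → Finset α) (hL : DangerousProc L)
    (cx cy cz cz' : α)
    (h1 : IsPrecolProc k ord fat cx cy cz)
    (h2 : IsPrecolProc k ord fat cx cy cz')
    (hne1 : ¬ ExtendsProc L cx cy cz)
    (hne2 : ¬ ExtendsProc L cx cy cz') :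
    cz = cz' := by
  exact procession_nonextendable_agree' hk hfat L hL cx cy cz cz' h1 h2 hne1 hne2
end

section
/- Let G be a fan procession with base xyz and let L be a dangerous list assignment for G. If some precoloring of the base xyz does not extend to an L-coloring of G, then G is an even fan procession, i.e., every constituent fat fan of G has even order. -/
namespace ProcAux
variable {α : Type*} [DecidableEq α]

/-- reachable colors at position `j` of a path coloring with lists `M`,
whose first vertex must avoid `a`. -/
def reach (M : ℕ → Finset α) (a : α) : ℕ → Finset α
  | 0 => M 0 \ {a}
  | j+1 => (M (j+1)).filter fun c => ∃ s ∈ reach M a j, s ≠ c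

lemma reach_nonempty (M : ℕ → Finset α) (a : α) (hM : ∀ j, 2 ≤ (M j).card) :
    ∀ j, (reach M a j).Nonempty := by
  intro j
  induction j with
  | zero =>
      rw [← Finset.card_pos, reach]
      have h1 : (M 0).card - ({a} : Finset α).card ≤ (M 0 \ {a}).card :=
        Finset.le_card_sdiff _ _
      simp only [Finset.card_singleton] at h1
      have := hM 0
      omega
  | succ j ih =>
      obtain ⟨s, hs⟩ := ih
      have h2 := hM (j+1)
      obtain ⟨c, hc, hcs⟩ : ∃ c ∈ M (j+1), c ≠ s := by
        by_contra h
        push_neg at h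
        have : M (j+1) ⊆ {s} := fun c hc => by simp [h c hc]
        have := Finset.card_le_card this
        simp at this; omega
      exact ⟨c, by rw [reach]; exact Finset.mem_filter.2 ⟨hc, ⟨s, hs, hcs.symm⟩⟩⟩

lemma reach_spec (M : ℕ → Finset α) (a : α) :
    ∀ j, ∀ c ∈ reach M a j, ∃ P : ℕ → α, P j = c ∧ (∀ i, i ≤ j → P i ∈ M i) ∧
      P 0 ≠ a ∧ ∀ i, i + 1 ≤ j → P i ≠ P (i+1) := by
  intro j
  induction j with
  | zero =>
      intro c hc
      rw [reach, Finset.mem_sdiff, Finset.mem_singleton] at hc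
      refine ⟨fun _ => c, rfl, fun i hi => ?_, hc.2, fun i hi => by omega⟩
      have : i = 0 := by omega
      subst this
      exact hc.1
  | succ j ih =>
      intro c hc
      rw [reach, Finset.mem_filter] at hc
      obtain ⟨hcM, s, hs, hsc⟩ := hc
      obtain ⟨P, hPj, hPmem, hP0, hPcons⟩ := ih s hs
      refine ⟨fun i => if i ≤ j then P i else c, by simp, ?_, ?_, ?_⟩
      · intro i hi
        by_cases h : i ≤ j
        · simpa [h] using hPmem i h
        · have : i = j+1 := by omega
          simp [h, this, hcM]
      · simpa using hP0
      · intro i hi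
        by_cases h : i + 1 ≤ j
        · simpa [h, Nat.le_of_succ_le h] using hPcons i h
        · have h1 : i = j := by omega
          subst h1
          simpa [hPj] using hsc

/-- There is a proper list coloring of the path `0, 1, …, n-1` where vertex `0`
avoids `a` and vertex `n-1` avoids `b`. -/
def PathP (M : ℕ → Finset α) (a b : α) (n : ℕ) : Prop :=
  ∃ P : ℕ → α, (∀ i, i < n → P i ∈ M i) ∧ P 0 ≠ a ∧ P (n-1) ≠ b ∧
    ∀ i, i + 1 < n → P i ≠ P (i+1)

lemma pathP_of_reach {M : ℕ → Finset α} {a b : α} {n : ℕ} (hn : 1 ≤ n)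
    {c : α} (hc : c ∈ reach M a (n-1)) (hcb : c ≠ b) : PathP M a b n := by
  obtain ⟨P, hPj, hPmem, hP0, hPcons⟩ := reach_spec M a (n-1) c hc
  exact ⟨P, fun i hi => hPmem i (by omega), hP0, by rw [hPj]; exact hcb,
    fun i hi => hPcons i (by omega)⟩

lemma path_one_bad (M : ℕ → Finset α) (a : α) (n : ℕ) (hn : 1 ≤ n)
    (hM : ∀ j, 2 ≤ (M j).card) :
    ∃ bad, ∀ b, b ≠ bad → PathP M a b n := by
  obtain ⟨c, hc⟩ := reach_nonempty M a hM (n-1)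
  refine ⟨c, fun b hb => ?_⟩
  by_cases h : ∃ c' ∈ reach M a (n-1), c' ≠ b
  · obtain ⟨c', hc', hcb⟩ := h
    exact pathP_of_reach hn hc' hcb
  · push_neg at h
    exact absurd (h c hc) (Ne.symm hb)

lemma path_one_bad' (M : ℕ → Finset α) (b : α) (n : ℕ) (hn : 1 ≤ n)
    (hM : ∀ j, 2 ≤ (M j).card) :
    ∃ bad, ∀ a, a ≠ bad → PathP M a b n := by
  obtain ⟨bad, hbad⟩ := path_one_bad (fun j => M (n-1-j)) b n hn (fun j => hM _)
  refine ⟨bad, fun a ha => ?_⟩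
  obtain ⟨P, hmem, h0, hend, hcons⟩ := hbad a ha
  refine ⟨fun i => P (n-1-i), fun i hi => ?_, ?_, ?_, fun i hi => ?_⟩
  · have h2 : n-1-(n-1-i) = i := by omega
    have h3 := hmem (n-1-i) (by omega)
    simp only [h2] at h3
    exact h3
  · simpa using hend
  · simpa using h0
  · have h2 : n-1-i = (n-1-(i+1)) + 1 := by omega
    have := hcons (n-1-(i+1)) (by omega)
    rw [← h2] at this
    exact this.symm

lemma chain_of_not_path (M : ℕ → Finset α) (a b : α) (n : ℕ) (hn : 1 ≤ n)
    (hM : ∀ j, 2 ≤ (M j).card) (hfail : ¬ PathP M a b n) :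
    ∃ s : ℕ → α, s (n-1) = b ∧ (M 0 = {a, s 0} ∧ a ≠ s 0) ∧
      ∀ j, j + 1 ≤ n - 1 → M (j+1) = {s j, s (j+1)} ∧ s j ≠ s (j+1) := by
  classical
  -- every reach set up to n-1 is a singleton
  have hsub : reach M a (n-1) ⊆ {b} := by
    intro c hc
    simp only [Finset.mem_singleton]
    by_contra hcb
    exact hfail (pathP_of_reach hn hc hcb)
  have hcard1 : ∀ j ≤ n-1, (reach M a j).card = 1 := by
    intro j hj
    by_contra h
    have hne := reach_nonempty M a hM j
    have h2 : 2 ≤ (reach M a j).card := by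
      have := Finset.card_pos.2 hne
      omega
    -- then all later reaches have card ≥ 2
    have hmono : ∀ m, 2 ≤ (reach M a (j+m)).card := by
      intro m
      induction m with
      | zero => exact h2
      | succ m ih =>
          have : M (j+m+1) ⊆ reach M a (j+m+1) := by
            intro c hc
            obtain ⟨s, hs, hsc⟩ :=
              Finset.exists_mem_ne (s := reach M a (j+m)) (by omega) c
            rw [show j+m+1 = (j+m)+1 from rfl, reach]
            exact Finset.mem_filter.2 ⟨hc, s, hs, hsc⟩
          calc 2 ≤ (M (j+m+1)).card := hM _
            _ ≤ _ := Finset.card_le_card this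
    have hA := hmono (n-1-j)
    rw [show j + (n-1-j) = n-1 by omega] at hA
    have hB := Finset.card_le_card hsub
    simp at hB
    omega
  set s : ℕ → α := fun j => (reach_nonempty M a hM j).choose with hs
  have hmem : ∀ j, s j ∈ reach M a j := fun j => (reach_nonempty M a hM j).choose_spec
  have hsingle : ∀ j ≤ n-1, reach M a j = {s j} := by
    intro j hj
    exact Finset.eq_singleton_iff_unique_mem.2 ⟨hmem j,
      fun c hc => Finset.card_le_one.1 (le_of_eq (hcard1 j hj)) c hc (s j) (hmem j)⟩
  refine ⟨s, ?_, ?_, ?_⟩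
  · have := hmem (n-1)
    have := hsub this
    simpa using this
  · have h0 : reach M a 0 = {s 0} := hsingle 0 (by omega)
    rw [reach] at h0
    constructor
    · apply Finset.eq_of_subset_of_card_le
      · intro c hc
        by_cases hca : c = a
        · simp [hca]
        · have : c ∈ M 0 \ {a} := Finset.mem_sdiff.2 ⟨hc, by simp [hca]⟩
          rw [h0] at this
          simp at this
          simp [this]
      · calc ({a, s 0} : Finset α).card ≤ 2 := Finset.card_insert_le _ _ |>.trans (by simp)
          _ ≤ (M 0).card := hM 0
    · intro hae
      have := hmem 0
      rw [reach] at this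
      simp [← hae] at this
  · intro j hj
    have hj' : reach M a (j+1) = {s (j+1)} := hsingle (j+1) hj
    have hjj : reach M a j = {s j} := hsingle j (by omega)
    rw [reach, hjj] at hj'
    have hss : s (j+1) ≠ s j := by
      have := hmem (j+1)
      rw [reach, hjj] at this
      simp only [Finset.mem_filter, Finset.mem_singleton] at this
      obtain ⟨-, t, ht, hts⟩ := this
      subst ht
      exact fun h => hts h.symm
    constructor
    · apply Finset.eq_of_subset_of_card_le
      · intro c hc
        by_cases hcs : c = s j
        · simp [hcs]
        · have : c ∈ (M (j+1)).filter fun c => ∃ t ∈ ({s j} : Finset α), t ≠ c := by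
            refine Finset.mem_filter.2 ⟨hc, s j, by simp, Ne.symm hcs⟩
          rw [hj'] at this
          simp at this
          simp [this]
      · calc ({s j, s (j+1)} : Finset α).card ≤ 2 :=
            Finset.card_insert_le _ _ |>.trans (by simp)
          _ ≤ (M (j+1)).card := hM _
    · exact hss.symm

lemma card_sdiff_single {S : Finset α} (h : 3 ≤ S.card) (e : α) :
    2 ≤ (S \ {e}).card := by
  have h1 : S.card - ({e} : Finset α).card ≤ (S \ {e}).card := Finset.le_card_sdiff _ _
  simp only [Finset.card_singleton] at h1
  omega

lemma mem_iff_of_sdiff_eq {S : Finset α} {p u v : α} (h3 : S.card = 3)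
    (h : S \ {p} = {u, v}) (huv : u ≠ v) :
    ∀ c, c ∈ S ↔ c = p ∨ c = u ∨ c = v := by
  have hcuv : ({u, v} : Finset α).card = 2 := by
    rw [Finset.card_insert_of_notMem (by simp [huv]), Finset.card_singleton]
  have hp : p ∈ S := by
    by_contra hp
    rw [Finset.sdiff_eq_self_of_disjoint (by simp [hp])] at h
    rw [h] at h3
    omega
  intro c
  constructor
  · intro hc
    by_cases hcp : c = p
    · exact Or.inl hcp
    · have h2 : c ∈ S \ {p} := Finset.mem_sdiff.2 ⟨hc, by simp [hcp]⟩
      rw [h] at h2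
      exact Or.inr (by simpa using h2)
  · rintro (hc | hc | hc)
    · exact hc ▸ hp
    · have h2 : u ∈ S \ {p} := by rw [h]; simp
      exact hc ▸ (Finset.mem_sdiff.1 h2).1
    · have h2 : v ∈ S \ {p} := by rw [h]; simp
      exact hc ▸ (Finset.mem_sdiff.1 h2).1

end ProcAux

section Piece
open ProcAux

variable {k : ℕ} {ord : Fin k → ℕ} {fat : Fin k → Bool} {α : Type*} [DecidableEq α]

/-- `ℕ`-indexed version of the lists on the path vertices of piece `i`,
padded with a default list `pad`. -/
def Lp (L : PVert k ord fat → Finset α) (pad : Finset α) (i : Fin k) (j : ℕ) :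
    Finset α :=
  if h : j < ord i then L (.pv i ⟨j, h⟩) else pad

lemma Lp_card {L : PVert k ord fat → Finset α} {pad : Finset α} {i : Fin k}
    (hL3 : ∀ j : Fin (ord i), (L (.pv i j)).card = 3) (hpad : 3 ≤ pad.card) :
    ∀ j, 3 ≤ (Lp L pad i j).card := by
  intro j
  unfold Lp
  by_cases h : j < ord i
  · rw [dif_pos h, hL3]
  · rwa [dif_neg h]

/-- The `i`-th piece of the procession can be properly list-colored given that
its boundary vertices `v_i`, `v_{i+1}` receive colors `a`, `b` and `y`
receives `cy`. -/
def PieceCol (L : PVert k ord fat → Finset α) (cy : α) (i : Fin k) (a b : α) :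
    Prop :=
  ∃ (hcol : α) (P : Fin (ord i) → α),
    (∀ hf : fat i = true, hcol ∈ L (.apex i hf) ∧ hcol ≠ a ∧ hcol ≠ b ∧ hcol ≠ cy) ∧
    (fat i = false → hcol = cy) ∧
    (ord i = 0 → a ≠ b) ∧
    (∀ j : Fin (ord i), P j ∈ L (.pv i j) ∧ P j ≠ hcol) ∧
    (∀ j : Fin (ord i), (j : ℕ) = 0 → P j ≠ a) ∧
    (∀ j : Fin (ord i), (j : ℕ) = ord i - 1 → P j ≠ b) ∧
    (∀ j j' : Fin (ord i), (j : ℕ) + 1 = (j' : ℕ) → P j ≠ P j')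

lemma pieceCol_of_path {L : PVert k ord fat → Finset α} {pad : Finset α}
    {cy : α} {i : Fin k} (hn : 1 ≤ ord i) {hcol a b : α}
    (hhub : ∀ hf : fat i = true, hcol ∈ L (.apex i hf) ∧ hcol ≠ a ∧ hcol ≠ b ∧ hcol ≠ cy)
    (hfan : fat i = false → hcol = cy)
    (hpath : PathP (fun j => Lp L pad i j \ {hcol}) a b (ord i)) :
    PieceCol L cy i a b := by
  obtain ⟨P, hmem, h0, hend, hcons⟩ := hpath
  refine ⟨hcol, fun j => P j, hhub, hfan, by omega, ?_, ?_, ?_, ?_⟩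
  · intro j
    have h := hmem (j : ℕ) j.isLt
    simp only [Lp, dif_pos j.isLt, Fin.eta, Finset.mem_sdiff, Finset.mem_singleton] at h
    exact h
  · intro j hj
    simpa [hj] using h0
  · intro j hj
    simpa [hj] using hend
  · intro j j' hjj
    have h := hcons (j : ℕ) (by rw [hjj]; exact j'.isLt)
    rwa [hjj] at h

lemma pieceCol_fan_one_bad_b {L : PVert k ord fat → Finset α} {pad : Finset α}
    {cy : α} {i : Fin k}
    (hL3 : ∀ j : Fin (ord i), (L (.pv i j)).card = 3) (hpad : 3 ≤ pad.card)
    (hfan : fat i = false) (a : α) :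
    ∃ bad, ∀ b, b ≠ bad → PieceCol L cy i a b := by
  by_cases hn : 1 ≤ ord i
  · obtain ⟨bad, hbad⟩ := path_one_bad (fun j => Lp L pad i j \ {cy}) a (ord i) hn
      (fun j => card_sdiff_single (Lp_card hL3 hpad j) cy)
    refine ⟨bad, fun b hb => ?_⟩
    exact pieceCol_of_path hn (fun hf => by simp [hfan] at hf) (fun _ => rfl)
      (hbad b hb)
  · refine ⟨a, fun b hb => ?_⟩
    refine ⟨cy, fun j => cy, fun hf => by simp [hfan] at hf, fun _ => rfl,
      fun _ => Ne.symm hb, fun j => ?_, fun j _ => ?_, fun j _ => ?_, fun j j' _ => ?_⟩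
    all_goals exact absurd j.isLt (by omega)

lemma pieceCol_fan_one_bad_a {L : PVert k ord fat → Finset α} {pad : Finset α}
    {cy : α} {i : Fin k}
    (hL3 : ∀ j : Fin (ord i), (L (.pv i j)).card = 3) (hpad : 3 ≤ pad.card)
    (hfan : fat i = false) (b : α) :
    ∃ bad, ∀ a, a ≠ bad → PieceCol L cy i a b := by
  by_cases hn : 1 ≤ ord i
  · obtain ⟨bad, hbad⟩ := path_one_bad' (fun j => Lp L pad i j \ {cy}) b (ord i) hn
      (fun j => card_sdiff_single (Lp_card hL3 hpad j) cy)
    refine ⟨bad, fun a ha => ?_⟩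
    exact pieceCol_of_path hn (fun hf => by simp [hfan] at hf) (fun _ => rfl)
      (hbad a ha)
  · refine ⟨b, fun a ha => ?_⟩
    refine ⟨cy, fun j => cy, fun hf => by simp [hfan] at hf, fun _ => rfl,
      fun _ => ha, fun j => ?_, fun j _ => ?_, fun j _ => ?_, fun j j' _ => ?_⟩
    all_goals exact absurd j.isLt (by omega)


lemma pieceCol_fat_one_bad_b {L : PVert k ord fat → Finset α} {pad : Finset α}
    {cy : α} {i : Fin k}
    (hL3 : ∀ j : Fin (ord i), (L (.pv i j)).card = 3) (hpad : 3 ≤ pad.card)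
    (hf : fat i = true) (hLA : (L (.apex i hf)).card = 5) (hn : 1 ≤ ord i)
    (a : α) :
    ∃ bad, ∀ b, b ≠ bad → PieceCol L cy i a b := by
  have hM : ∀ p : α, ∀ j, 2 ≤ ((Lp L pad i j \ {p})).card :=
    fun p j => card_sdiff_single (Lp_card hL3 hpad j) p
  have hfp : ∀ p : α, ∃ bad, ∀ b, b ≠ bad →
      PathP (fun j => Lp L pad i j \ {p}) a b (ord i) :=
    fun p => path_one_bad _ a _ hn (hM p)
  choose f hfp using hfp
  set A : Finset α := L (.apex i hf) \ {a, cy} with hA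
  have hAcard : 3 ≤ A.card := by
    have h1 : (L (.apex i hf)).card - ({a, cy} : Finset α).card ≤ A.card :=
      Finset.le_card_sdiff _ _
    have h2 : ({a, cy} : Finset α).card ≤ 2 :=
      (Finset.card_insert_le _ _).trans (by simp)
    omega
  have key : ∀ b, (∃ p ∈ A, p ≠ b ∧ f p ≠ b) → PieceCol L cy i a b := by
    intro b ⟨p, hpA, hpb, hfpb⟩
    have hp5 := Finset.mem_sdiff.1 hpA
    simp only [Finset.mem_insert, Finset.mem_singleton, not_or] at hp5
    exact pieceCol_of_path hn
      (fun hf' => ⟨hp5.1, hp5.2.1, hpb, hp5.2.2⟩)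
      (fun hff => absurd hf (by simp [hff]))
      (hfp p b (Ne.symm hfpb))
  by_cases hex : ∃ b0, ∀ p ∈ A, p ≠ b0 → f p = b0
  · obtain ⟨b0, hb0⟩ := hex
    refine ⟨b0, fun b hb => key b ?_⟩
    by_contra hcon
    push_neg at hcon
    obtain ⟨p, hp⟩ : (A \ {b, b0}).Nonempty := by
      rw [← Finset.card_pos]
      have h1 : A.card - ({b, b0} : Finset α).card ≤ (A \ {b, b0}).card :=
        Finset.le_card_sdiff _ _
      have h2 : ({b, b0} : Finset α).card ≤ 2 :=
        (Finset.card_insert_le _ _).trans (by simp)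
      omega
    rw [Finset.mem_sdiff] at hp
    obtain ⟨hpA, hpb⟩ := hp
    simp only [Finset.mem_insert, Finset.mem_singleton, not_or] at hpb
    have h1 := hcon p hpA hpb.1
    have h2 := hb0 p hpA hpb.2
    exact hb (h1 ▸ h2)
  · push_neg at hex
    exact ⟨a, fun b _ => key b (by
      obtain ⟨p, hpA, hpb, hfpb⟩ := hex b
      exact ⟨p, hpA, hpb, hfpb⟩)⟩

lemma pieceCol_fat_one_bad_a {L : PVert k ord fat → Finset α} {pad : Finset α}
    {cy : α} {i : Fin k}
    (hL3 : ∀ j : Fin (ord i), (L (.pv i j)).card = 3) (hpad : 3 ≤ pad.card)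
    (hf : fat i = true) (hLA : (L (.apex i hf)).card = 5) (hn : 1 ≤ ord i)
    (b : α) :
    ∃ bad, ∀ a, a ≠ bad → PieceCol L cy i a b := by
  have hM : ∀ p : α, ∀ j, 2 ≤ ((Lp L pad i j \ {p})).card :=
    fun p j => card_sdiff_single (Lp_card hL3 hpad j) p
  have hfp : ∀ p : α, ∃ bad, ∀ a, a ≠ bad →
      PathP (fun j => Lp L pad i j \ {p}) a b (ord i) :=
    fun p => path_one_bad' _ b _ hn (hM p)
  choose f hfp using hfp
  set A : Finset α := L (.apex i hf) \ {b, cy} with hA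
  have hAcard : 3 ≤ A.card := by
    have h1 : (L (.apex i hf)).card - ({b, cy} : Finset α).card ≤ A.card :=
      Finset.le_card_sdiff _ _
    have h2 : ({b, cy} : Finset α).card ≤ 2 :=
      (Finset.card_insert_le _ _).trans (by simp)
    omega
  have key : ∀ a, (∃ p ∈ A, p ≠ a ∧ f p ≠ a) → PieceCol L cy i a b := by
    intro a ⟨p, hpA, hpa, hfpa⟩
    have hp5 := Finset.mem_sdiff.1 hpA
    simp only [Finset.mem_insert, Finset.mem_singleton, not_or] at hp5
    exact pieceCol_of_path hn
      (fun hf' => ⟨hp5.1, hpa, hp5.2.1, hp5.2.2⟩)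
      (fun hff => absurd hf (by simp [hff]))
      (hfp p a (Ne.symm hfpa))
  by_cases hex : ∃ a0, ∀ p ∈ A, p ≠ a0 → f p = a0
  · obtain ⟨a0, ha0⟩ := hex
    refine ⟨a0, fun a ha => key a ?_⟩
    by_contra hcon
    push_neg at hcon
    obtain ⟨p, hp⟩ : (A \ {a, a0}).Nonempty := by
      rw [← Finset.card_pos]
      have h1 : A.card - ({a, a0} : Finset α).card ≤ (A \ {a, a0}).card :=
        Finset.le_card_sdiff _ _
      have h2 : ({a, a0} : Finset α).card ≤ 2 :=
        (Finset.card_insert_le _ _).trans (by simp)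
      omega
    rw [Finset.mem_sdiff] at hp
    obtain ⟨hpA, hpa⟩ := hp
    simp only [Finset.mem_insert, Finset.mem_singleton, not_or] at hpa
    have h1 := hcon p hpA hpa.1
    have h2 := ha0 p hpA hpa.2
    exact ha (h1 ▸ h2)
  · push_neg at hex
    exact ⟨b, fun a _ => key a (hex a)⟩

lemma pieceCol_fat_odd {L : PVert k ord fat → Finset α} {pad : Finset α}
    {cy : α} {i : Fin k}
    (hL3 : ∀ j : Fin (ord i), (L (.pv i j)).card = 3) (hpad : 3 ≤ pad.card)
    (hf : fat i = true) (hLA : (L (.apex i hf)).card = 5)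
    (hodd : Odd (ord i)) (a b : α) :
    PieceCol L cy i a b := by
  set n := ord i with hn'
  have hn : 1 ≤ n := by obtain ⟨m, hm⟩ := hodd; omega
  have hM : ∀ p : α, ∀ j, 2 ≤ ((Lp L pad i j \ {p})).card :=
    fun p j => card_sdiff_single (Lp_card hL3 hpad j) p
  by_contra hcon
  have hnopath : ∀ p ∈ (L (.apex i hf) \ {a, b, cy} : Finset α),
      ¬ PathP (fun j => Lp L pad i j \ {p}) a b n := by
    intro p hp hpath
    have hp5 := Finset.mem_sdiff.1 hp
    simp only [Finset.mem_insert, Finset.mem_singleton, not_or] at hp5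
    exact hcon (pieceCol_of_path hn
      (fun hf' => ⟨hp5.1, hp5.2.1, hp5.2.2.1, hp5.2.2.2⟩)
      (fun hff => absurd hf (by simp [hff])) hpath)
  have hAcard : 2 ≤ (L (.apex i hf) \ {a, b, cy}).card := by
    have h1 : (L (.apex i hf)).card - ({a, b, cy} : Finset α).card ≤
        (L (.apex i hf) \ {a, b, cy}).card := Finset.le_card_sdiff _ _
    have h2 : ({a, b, cy} : Finset α).card ≤ 3 := by
      have i1 := Finset.card_insert_le a ({b, cy} : Finset α)
      have i2 := Finset.card_insert_le b ({cy} : Finset α)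
      simp only [Finset.card_singleton] at i2
      omega
    omega
  obtain ⟨p1, hp1, p2, hp2, hp12⟩ :=
    Finset.one_lt_card.1 (by omega : 1 < (L (.apex i hf) \ {a, b, cy}).card)
  have hp1' := Finset.mem_sdiff.1 hp1
  simp only [Finset.mem_insert, Finset.mem_singleton, not_or] at hp1'
  have hp2' := Finset.mem_sdiff.1 hp2
  simp only [Finset.mem_insert, Finset.mem_singleton, not_or] at hp2'
  obtain ⟨s, hsb, ⟨hs0, has0⟩, hschain⟩ :=
    chain_of_not_path _ a b n hn (hM p1) (hnopath p1 hp1)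
  obtain ⟨t, htb, ⟨ht0, hat0⟩, htchain⟩ :=
    chain_of_not_path _ a b n hn (hM p2) (hnopath p2 hp2)
  have hLp3 : ∀ j, j < n → (Lp L pad i j).card = 3 := fun j hj => by
    unfold Lp; rw [dif_pos hj]; exact hL3 _
  have hmem1 : ∀ c, c ∈ Lp L pad i 0 ↔ c = p1 ∨ c = a ∨ c = s 0 :=
    mem_iff_of_sdiff_eq (hLp3 0 (by omega)) hs0 has0
  have hmem2 : ∀ c, c ∈ Lp L pad i 0 ↔ c = p2 ∨ c = a ∨ c = t 0 :=
    mem_iff_of_sdiff_eq (hLp3 0 (by omega)) ht0 hat0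
  have hmem1' : ∀ j, j + 1 ≤ n - 1 →
      ∀ c, c ∈ Lp L pad i (j+1) ↔ c = p1 ∨ c = s j ∨ c = s (j+1) :=
    fun j hj => mem_iff_of_sdiff_eq (hLp3 (j+1) (by omega)) (hschain j hj).1
      (hschain j hj).2
  have hmem2' : ∀ j, j + 1 ≤ n - 1 →
      ∀ c, c ∈ Lp L pad i (j+1) ↔ c = p2 ∨ c = t j ∨ c = t (j+1) :=
    fun j hj => mem_iff_of_sdiff_eq (hLp3 (j+1) (by omega)) (htchain j hj).1
      (htchain j hj).2
  have hsp1 : ∀ j, j ≤ n - 1 → s j ≠ p1 := by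
    intro j hj
    cases j with
    | zero =>
        have h2 : s 0 ∈ Lp L pad i 0 \ {p1} := by rw [hs0]; simp
        simpa using (Finset.mem_sdiff.1 h2).2
    | succ m =>
        have h2 : s (m+1) ∈ Lp L pad i (m+1) \ {p1} := by
          rw [(hschain m hj).1]; simp
        simpa using (Finset.mem_sdiff.1 h2).2
  have htp2 : ∀ j, j ≤ n - 1 → t j ≠ p2 := by
    intro j hj
    cases j with
    | zero =>
        have h2 : t 0 ∈ Lp L pad i 0 \ {p2} := by rw [ht0]; simp
        simpa using (Finset.mem_sdiff.1 h2).2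
    | succ m =>
        have h2 : t (m+1) ∈ Lp L pad i (m+1) \ {p2} := by
          rw [(htchain m hj).1]; simp
        simpa using (Finset.mem_sdiff.1 h2).2
  have main : ∀ j, j ≤ n - 1 →
      (j % 2 = 0 → s j = p2 ∧ t j = p1) ∧
      (j % 2 = 1 → s j = t j ∧ s j ≠ p1 ∧ s j ≠ p2) := by
    intro j
    induction j with
    | zero =>
        intro _
        refine ⟨fun _ => ⟨?_, ?_⟩, fun h => by omega⟩
        · have hp2mem : p2 ∈ Lp L pad i 0 := (hmem2 p2).2 (Or.inl rfl)
          rcases (hmem1 p2).1 hp2mem with h | h | h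
          · exact absurd h.symm hp12
          · exact absurd h hp2'.2.1
          · exact h.symm
        · have hp1mem : p1 ∈ Lp L pad i 0 := (hmem1 p1).2 (Or.inl rfl)
          rcases (hmem2 p1).1 hp1mem with h | h | h
          · exact absurd h hp12
          · exact absurd h hp1'.2.1
          · exact h.symm
    | succ j ih =>
        intro hj
        have ihj := ih (by omega)
        have hm1 := hmem1' j hj
        have hm2 := hmem2' j hj
        rcases Nat.even_or_odd j with hje | hjo
        · have hj0 : j % 2 = 0 := Nat.even_iff.1 hje
          obtain ⟨hsj, htj⟩ := ihj.1 hj0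
          refine ⟨fun h => by omega, fun _ => ?_⟩
          have h1 : s (j+1) ≠ p1 := hsp1 (j+1) hj
          have h2 : s (j+1) ≠ s j := ((hschain j hj).2).symm
          have h3 : s (j+1) ∈ Lp L pad i (j+1) := by
            have h4 : s (j+1) ∈ Lp L pad i (j+1) \ {p1} := by
              rw [(hschain j hj).1]; simp
            exact (Finset.mem_sdiff.1 h4).1
          have h5 : s (j+1) ≠ p2 := by rw [← hsj]; exact h2
          rcases (hm2 (s (j+1))).1 h3 with h | h | h
          · exact absurd h h5
          · rw [htj] at h; exact absurd h h1
          · exact ⟨h, h1, h5⟩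
        · have hj1 : j % 2 = 1 := Nat.odd_iff.1 hjo
          obtain ⟨hst, hsp, hsq⟩ := ihj.2 hj1
          refine ⟨fun _ => ⟨?_, ?_⟩, fun h => by omega⟩
          · have hp2mem : p2 ∈ Lp L pad i (j+1) := (hm2 p2).2 (Or.inl rfl)
            rcases (hm1 p2).1 hp2mem with h | h | h
            · exact absurd h.symm hp12
            · exact absurd h.symm hsq
            · exact h.symm
          · have hp1mem : p1 ∈ Lp L pad i (j+1) := (hm1 p1).2 (Or.inl rfl)
            rcases (hm2 p1).1 hp1mem with h | h | h
            · exact absurd h hp12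
            · rw [← hst] at h; exact absurd h.symm hsp
            · exact h.symm
  have hfin : (n-1) % 2 = 0 := by obtain ⟨m, hm⟩ := hodd; omega
  have hlast := (main (n-1) le_rfl).1 hfin
  rw [hsb] at hlast
  exact hp2'.2.2.1 hlast.1.symm

end Piece

/-- Simple `ℕ`-recursor for sequences, with definitional unfolding. -/
def seqRec {α : Type*} (c0 : α) (g : ℕ → α → α) : ℕ → α :=
  fun n => Nat.rec c0 g n

/-- If some precoloring of the base of a fan procession with a dangerous list
assignment does not extend, then the procession is even: every constituent
fat fan has even order. -/
theorem procession_nonextendable_even {k : ℕ} {ord : Fin k → ℕ}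
    {fat : Fin k → Bool} {α : Type*}
    (hk : 1 ≤ k) (hfat : ∀ i : Fin k, fat i = true → 1 ≤ ord i)
    (L : PVert k ord fat → Finset α) (hL : DangerousProc L)
    (cx cy cz : α)
    (h1 : IsPrecolProc k ord fat cx cy cz)
    (hne : ¬ ExtendsProc L cx cy cz) :
    ∀ i : Fin k, fat i = true → Even (ord i) := by
  classical
  intro i0 hfi0
  by_contra hoddc
  rw [Nat.not_even_iff_odd] at hoddc
  apply hne
  obtain ⟨hL1, hL2, hL5⟩ := hL
  obtain ⟨hxy, hyz, -⟩ := h1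
  set pad := L (.apex i0 hfi0) with hpaddef
  have hpad : 3 ≤ pad.card := by rw [hpaddef, hL5 i0 hfi0]; omega
  -- the "one bad color" functions for each piece
  have hPC1 : ∀ (i : Fin k) (a : α), ∃ bad, ∀ b, b ≠ bad → PieceCol L cy i a b := by
    intro i a
    by_cases hfi : fat i = true
    · exact pieceCol_fat_one_bad_b (pad := pad) (hL2 i) hpad hfi (hL5 i hfi)
        (hfat i hfi) a
    · exact pieceCol_fan_one_bad_b (pad := pad) (hL2 i) hpad
        (by simpa using hfi) a
  have hPC2 : ∀ (i : Fin k) (b : α), ∃ bad, ∀ a, a ≠ bad → PieceCol L cy i a b := by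
    intro i b
    by_cases hfi : fat i = true
    · exact pieceCol_fat_one_bad_a (pad := pad) (hL2 i) hpad hfi (hL5 i hfi)
        (hfat i hfi) b
    · exact pieceCol_fan_one_bad_a (pad := pad) (hL2 i) hpad
        (by simpa using hfi) b
  choose badb hbadb using hPC1
  choose bada hbada using hPC2
  -- a choice function on finsets
  set pick : Finset α → α := fun S => if h : S.Nonempty then h.choose else cx
    with hpickdef
  have hpick_mem : ∀ S : Finset α, S.Nonempty → pick S ∈ S := by
    intro S hS
    rw [hpickdef]
    simp only [dif_pos hS]
    exact hS.choose_spec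
  -- cardinality of the allowed sets for boundary vertices
  have hbndpos : ∀ (i : Fin k) (hi : (i : ℕ) ≠ 0) (c d : α),
      (L (.bnd i hi) \ {c, d}).Nonempty := by
    intro i hi c d
    rw [← Finset.card_pos]
    have hc1 : (L (.bnd i hi)).card - ({c, d} : Finset α).card ≤
        (L (.bnd i hi) \ {c, d}).card := Finset.le_card_sdiff _ _
    have hc2 : ({c, d} : Finset α).card ≤ 2 :=
      (Finset.card_insert_le _ _).trans (by simp)
    have hc3 := hL1 i hi
    omega
  -- the left recursion for boundary colors
  set gL : ℕ → α → α := fun m prev =>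
    if h : m + 1 < k then
      pick (L (.bnd ⟨m+1, h⟩ (Nat.succ_ne_zero m)) \
        {cy, badb ⟨m, by omega⟩ prev})
    else cx
    with hgLdef
  set Bl : ℕ → α := seqRec cx gL with hBldef
  have hBl0 : Bl 0 = cx := rfl
  have hBl : ∀ m (h : m + 1 < k),
      (∀ (i : Fin k) (hi : (i : ℕ) ≠ 0), (i : ℕ) = m + 1 →
        Bl (m+1) ∈ L (.bnd i hi)) ∧
      Bl (m+1) ≠ cy ∧
      (∀ i' : Fin k, (i' : ℕ) = m → Bl (m+1) ≠ badb i' (Bl m)) := by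
    intro m h
    have heq : Bl (m+1) = pick (L (.bnd ⟨m+1, h⟩ (Nat.succ_ne_zero m)) \
        {cy, badb ⟨m, by omega⟩ (Bl m)}) := by
      rw [hBldef]
      show gL m (seqRec cx gL m) = _
      rw [hgLdef]
      simp only [dif_pos h]
    have hmem := hpick_mem _ (hbndpos ⟨m+1, h⟩ (Nat.succ_ne_zero m) cy
      (badb ⟨m, by omega⟩ (Bl m)))
    rw [← heq, Finset.mem_sdiff, Finset.mem_insert, Finset.mem_singleton] at hmem
    push_neg at hmem
    refine ⟨?_, hmem.2.1, ?_⟩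
    · rintro ⟨iv, hik⟩ hi rfl
      exact hmem.1
    · rintro ⟨iv, hik⟩ rfl
      exact hmem.2.2
  -- the right recursion for boundary colors
  set gR : ℕ → α → α := fun m prev =>
    if h : m + 1 ≤ k - 1 then
      pick (L (.bnd ⟨k-m-1, by omega⟩ ((by omega : k - m - 1 ≠ 0))) \
        {cy, bada ⟨k-m-1, by omega⟩ prev})
    else cx
    with hgRdef
  set Br : ℕ → α := seqRec cz gR with hBrdef
  have hBr0 : Br 0 = cz := rfl
  have hBr : ∀ m (h : m + 1 ≤ k - 1),
      (∀ (i : Fin k) (hi : (i : ℕ) ≠ 0), (i : ℕ) = k - m - 1 →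
        Br (m+1) ∈ L (.bnd i hi)) ∧
      Br (m+1) ≠ cy ∧
      (∀ i' : Fin k, (i' : ℕ) = k - m - 1 → Br (m+1) ≠ bada i' (Br m)) := by
    intro m h
    have heq : Br (m+1) = pick (L (.bnd ⟨k-m-1, by omega⟩ ((by omega : k - m - 1 ≠ 0))) \
        {cy, bada ⟨k-m-1, by omega⟩ (Br m)}) := by
      rw [hBrdef]
      show gR m (seqRec cz gR m) = _
      rw [hgRdef]
      simp only [dif_pos h]
    have hmem := hpick_mem _ (hbndpos ⟨k-m-1, by omega⟩ ((by omega : k - m - 1 ≠ 0)) cy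
      (bada ⟨k-m-1, by omega⟩ (Br m)))
    rw [← heq, Finset.mem_sdiff, Finset.mem_insert, Finset.mem_singleton] at hmem
    push_neg at hmem
    refine ⟨?_, hmem.2.1, ?_⟩
    · rintro ⟨iv, hik⟩ hi rfl
      exact hmem.1
    · rintro ⟨iv, hik⟩ rfl
      exact hmem.2.2
  -- the global boundary coloring
  set B : ℕ → α := fun m => if m ≤ (i0 : ℕ) then Bl m else Br (k - m)
    with hBdef
  have hB0 : B 0 = cx := by rw [hBdef]; simp only [Nat.zero_le, if_pos]; exact hBl0
  have hBk : B k = cz := by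
    rw [hBdef]
    have : ¬ (k ≤ (i0 : ℕ)) := by have := i0.isLt; omega
    simp only [this, if_false, Nat.sub_self]
    exact hBr0
  have hBint : ∀ (i : Fin k) (hi : (i : ℕ) ≠ 0),
      B (i : ℕ) ∈ L (.bnd i hi) ∧ B (i : ℕ) ≠ cy := by
    intro i hi
    by_cases hle : (i : ℕ) ≤ (i0 : ℕ)
    · have hBi : B (i : ℕ) = Bl (i : ℕ) := by rw [hBdef]; simp [hle]
      obtain ⟨m, hm⟩ : ∃ m, (i : ℕ) = m + 1 := ⟨(i : ℕ) - 1, by omega⟩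
      have hmk : m + 1 < k := by have := i.isLt; omega
      have h := hBl m hmk
      rw [hBi, hm]
      exact ⟨h.1 i hi hm, h.2.1⟩
    · have hBi : B (i : ℕ) = Br (k - (i : ℕ)) := by rw [hBdef]; simp [hle]
      obtain ⟨m, hm⟩ : ∃ m, k - (i : ℕ) = m + 1 := ⟨k - (i : ℕ) - 1, by
        have := i.isLt; omega⟩
      have hmk : m + 1 ≤ k - 1 := by have := i.isLt; omega
      have h := hBr m hmk
      have hival : (i : ℕ) = k - m - 1 := by have := i.isLt; omega
      rw [hBi, hm]
      exact ⟨h.1 i hi hival, h.2.1⟩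
  -- every piece is colorable with these boundary colors
  have hPCall : ∀ i : Fin k, PieceCol L cy i (B (i : ℕ)) (B ((i : ℕ) + 1)) := by
    intro i
    rcases lt_trichotomy (i : ℕ) (i0 : ℕ) with hlt | heq | hgt
    · have hB1 : B (i : ℕ) = Bl (i : ℕ) := by rw [hBdef]; simp [Nat.le_of_lt hlt]
      have hB2 : B ((i : ℕ) + 1) = Bl ((i : ℕ) + 1) := by
        rw [hBdef]; simp [Nat.succ_le_of_lt hlt]
      have hmk : (i : ℕ) + 1 < k := by have := i0.isLt; omega
      have h := (hBl (i : ℕ) hmk).2.2 i rfl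
      rw [hB1, hB2]
      exact hbadb i (Bl (i : ℕ)) (Bl ((i : ℕ) + 1)) h
    · have hieq : i = i0 := Fin.ext heq
      subst hieq
      exact pieceCol_fat_odd (pad := pad) (hL2 i) hpad hfi0 (hL5 i hfi0) hoddc _ _
    · have hB1 : B (i : ℕ) = Br (k - (i : ℕ)) := by
        rw [hBdef]; simp [Nat.not_le.2 hgt]
      have hB2 : B ((i : ℕ) + 1) = Br (k - (i : ℕ) - 1) := by
        rw [hBdef]
        have : ¬ ((i : ℕ) + 1 ≤ (i0 : ℕ)) := by omega
        simp only [this, if_false]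
        congr 1
      obtain ⟨m, hm⟩ : ∃ m, k - (i : ℕ) = m + 1 := ⟨k - (i : ℕ) - 1, by
        have := i.isLt; omega⟩
      have hmk : m + 1 ≤ k - 1 := by have := i.isLt; omega
      have hival : (i : ℕ) = k - m - 1 := by have := i.isLt; omega
      have h := (hBr m hmk).2.2 i hival
      have hm' : k - (i : ℕ) - 1 = m := by omega
      rw [hB1, hB2, hm', hm]
      exact hbada i (Br m) (Br (m + 1)) h
  -- extract the piece colorings
  choose hcF PF hq1 hq2 hq3 hq4 hq5 hq6 hq7 using hPCall
  -- the final coloring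
  set ψ : PVert k ord fat → α := fun w =>
    match w with
    | .x => cx
    | .y => cy
    | .z => cz
    | .bnd i _ => B (i : ℕ)
    | .apex i _ => hcF i
    | .pv i j => PF i j
    with hψdef
  have hbv : ∀ m, m ≤ k → ψ (bvert m) = B m := by
    intro m hm
    unfold bvert
    by_cases h0 : m = 0
    · subst h0
      simp only [dif_pos]
      exact hB0.symm
    · by_cases hkm : k ≤ m
      · have : m = k := by omega
        subst this
        rw [dif_neg h0, dif_pos hkm]
        exact hBk.symm
      · rw [dif_neg h0, dif_neg hkm]
  have hhub : ∀ i : Fin k, ψ (hub i) = hcF i := by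
    intro i
    unfold hub
    by_cases hfi : fat i = true
    · rw [dif_pos hfi]
    · rw [dif_neg hfi]
      have := hq2 i (by simpa using hfi)
      exact this.symm
  refine ⟨ψ, ?_, rfl, rfl, rfl, ?_⟩
  · -- properness
    intro u w hadj
    rw [procGraph, SimpleGraph.fromEdgeSet_adj] at hadj
    obtain ⟨hmem, hne'⟩ := hadj
    simp only [Set.mem_union, Set.mem_insert_iff, Set.mem_singleton_iff,
      Set.mem_setOf_eq] at hmem
    have hik : ∀ i : Fin k, (i : ℕ) ≤ k := fun i => le_of_lt i.isLt
    have hik1 : ∀ i : Fin k, (i : ℕ) + 1 ≤ k := fun i => i.isLt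
    rcases hmem with (((((((h | h) | h) | h) | h) | h) | h) | h)
    · -- x-y and y-z
      rcases h with h | h
      · rcases Sym2.eq_iff.1 h with ⟨rfl, rfl⟩ | ⟨rfl, rfl⟩
        · exact hxy
        · exact hxy.symm
      · rcases Sym2.eq_iff.1 h with ⟨rfl, rfl⟩ | ⟨rfl, rfl⟩
        · exact hyz
        · exact hyz.symm
    · -- y-bnd
      obtain ⟨i, hi, h⟩ := h
      rcases Sym2.eq_iff.1 h with ⟨rfl, rfl⟩ | ⟨rfl, rfl⟩
      · exact ((hBint i hi).2).symm
      · exact (hBint i hi).2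
    · -- apex edges
      obtain ⟨i, hfi, h | h | h⟩ := h
      · rcases Sym2.eq_iff.1 h with ⟨rfl, rfl⟩ | ⟨rfl, rfl⟩
        · show hcF i ≠ ψ (bvert (i : ℕ))
          rw [hbv _ (hik i)]
          exact (hq1 i hfi).2.1
        · show ψ (bvert (i : ℕ)) ≠ hcF i
          rw [hbv _ (hik i)]
          exact ((hq1 i hfi).2.1).symm
      · rcases Sym2.eq_iff.1 h with ⟨rfl, rfl⟩ | ⟨rfl, rfl⟩
        · exact (hq1 i hfi).2.2.2
        · exact ((hq1 i hfi).2.2.2).symm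
      · rcases Sym2.eq_iff.1 h with ⟨rfl, rfl⟩ | ⟨rfl, rfl⟩
        · show hcF i ≠ ψ (bvert ((i : ℕ) + 1))
          rw [hbv _ (hik1 i)]
          exact (hq1 i hfi).2.2.1
        · show ψ (bvert ((i : ℕ) + 1)) ≠ hcF i
          rw [hbv _ (hik1 i)]
          exact ((hq1 i hfi).2.2.1).symm
    · -- hub-pv
      obtain ⟨i, j, h⟩ := h
      rcases Sym2.eq_iff.1 h with ⟨rfl, rfl⟩ | ⟨rfl, rfl⟩
      · show ψ (hub i) ≠ PF i j
        rw [hhub i]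
        exact ((hq4 i j).2).symm
      · show PF i j ≠ ψ (hub i)
        rw [hhub i]
        exact (hq4 i j).2
    · -- bvert-pv (first)
      obtain ⟨i, j, hj, h⟩ := h
      rcases Sym2.eq_iff.1 h with ⟨rfl, rfl⟩ | ⟨rfl, rfl⟩
      · show ψ (bvert (i : ℕ)) ≠ PF i j
        rw [hbv _ (hik i)]
        exact (hq5 i j hj).symm
      · show PF i j ≠ ψ (bvert (i : ℕ))
        rw [hbv _ (hik i)]
        exact hq5 i j hj
    · -- pv-pv
      obtain ⟨i, j, j', hjj, h⟩ := h
      rcases Sym2.eq_iff.1 h with ⟨rfl, rfl⟩ | ⟨rfl, rfl⟩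
      · exact hq7 i j j' hjj
      · exact (hq7 i j j' hjj).symm
    · -- pv-bvert (last)
      obtain ⟨i, j, hj, h⟩ := h
      rcases Sym2.eq_iff.1 h with ⟨rfl, rfl⟩ | ⟨rfl, rfl⟩
      · show PF i j ≠ ψ (bvert ((i : ℕ) + 1))
        rw [hbv _ (hik1 i)]
        exact hq6 i j hj
      · show ψ (bvert ((i : ℕ) + 1)) ≠ PF i j
        rw [hbv _ (hik1 i)]
        exact (hq6 i j hj).symm
    · -- order-0 fan edge
      obtain ⟨i, hfi, hoi, h⟩ := h
      rcases Sym2.eq_iff.1 h with ⟨rfl, rfl⟩ | ⟨rfl, rfl⟩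
      · show ψ (bvert (i : ℕ)) ≠ ψ (bvert ((i : ℕ) + 1))
        rw [hbv _ (hik i), hbv _ (hik1 i)]
        exact hq3 i hoi
      · show ψ (bvert ((i : ℕ) + 1)) ≠ ψ (bvert (i : ℕ))
        rw [hbv _ (hik i), hbv _ (hik1 i)]
        exact (hq3 i hoi).symm
  · -- list membership
    intro w hwx hwy hwz
    match w with
    | .x => exact absurd rfl hwx
    | .y => exact absurd rfl hwy
    | .z => exact absurd rfl hwz
    | .bnd i hi => exact (hBint i hi).1
    | .apex i hfi => exact (hq1 i hfi).1
    | .pv i j => exact (hq4 i j).1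
end
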